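/- Let V ~ N(0,1) be a standard Gaussian random variable and let σ > 0, a ≥ 0. Then E[V·tanh(aV)] ≤ a - a³ + 2·15·a⁵/15 = a - a³ + 2a⁵, using E[V²]=1, E[V⁴]=3, E[V⁶]=15. More precisely, E[V·tanh(aV)] ≤ (1/a)·E[(aV)² - (aV)⁴/3 + 2(aV)⁶/15] = a - a³ + 2a⁵ for a > 0. -/

import Mathlib

open MeasureTheory ProbabilityTheory

open Real Set

lemma mono_aux {f f' : ℝ → ℝ} (hder : ∀ y, HasDerivAt f (f' y) y)
    (h0 : f 0 = 0) {x : ℝ} (hx : 0 ≤ x)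
    (hd : ∀ y, 0 ≤ y → y ≤ x → 0 ≤ f' y) : 0 ≤ f x := by
  have hdiff : Differentiable ℝ f := fun y => (hder y).differentiableAt
  have hmono : MonotoneOn f (Icc 0 x) := by
    refine monotoneOn_of_deriv_nonneg (convex_Icc 0 x) hdiff.continuous.continuousOn
      hdiff.differentiableOn ?_
    intro y hy
    rw [interior_Icc] at hy
    rw [(hder y).deriv]
    exact hd y hy.1.le hy.2.le
  have := hmono (Set.left_mem_Icc.2 hx) (Set.right_mem_Icc.2 hx) hx
  rwa [h0] at this

lemma cosh_ge_quad {x : ℝ} (hx : 0 ≤ x) : 1 + x ^ 2 / 2 ≤ Real.cosh x := by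
  have h := mono_aux (f := fun y => Real.cosh y - 1 - y ^ 2 / 2)
    (f' := fun y => Real.sinh y - y)
    (fun y => ((((Real.hasDerivAt_cosh y).sub_const 1).sub
      ((hasDerivAt_pow 2 y).div_const 2)).congr_deriv (by push_cast; ring)))
    (by simp) hx
    (fun y hy _ => by simpa using sub_nonneg.2 (Real.self_le_sinh_iff.2 hy))
  linarith

lemma sinh_ge_cubic {x : ℝ} (hx : 0 ≤ x) : x + x ^ 3 / 6 ≤ Real.sinh x := by
  have h := mono_aux (f := fun y => Real.sinh y - (y + y ^ 3 / 6))
    (f' := fun y => Real.cosh y - (1 + y ^ 2 / 2))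
    (fun y => (((Real.hasDerivAt_sinh y).sub
      ((hasDerivAt_id y).add ((hasDerivAt_pow 3 y).div_const 6))).congr_deriv (by push_cast; ring)))
    (by simp) hx
    (fun y hy _ => sub_nonneg.2 (cosh_ge_quad hy))
  linarith

lemma cosh_le_nine {x : ℝ} (hx : 0 ≤ x) (hx2 : x ≤ 2) : Real.cosh x ≤ 9 := by
  have h1 : Real.exp x ≤ Real.exp 2 := Real.exp_le_exp.2 hx2
  have h2 : Real.exp 2 = Real.exp 1 * Real.exp 1 := by rw [← Real.exp_add]; norm_num
  have h3 := Real.exp_one_lt_d9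
  have h4 : Real.exp (-x) ≤ 1 := Real.exp_le_one_iff.2 (by linarith)
  rw [Real.cosh_eq]
  nlinarith [Real.exp_pos 1]

lemma sinh_le_nine {x : ℝ} (hx : 0 ≤ x) (hx2 : x ≤ 2) : Real.sinh x ≤ 9 * x := by
  have h := mono_aux (f := fun y => 9 * y - Real.sinh y)
    (f' := fun y => 9 - Real.cosh y)
    (fun y => ((((hasDerivAt_id y).const_mul 9).sub
      (Real.hasDerivAt_sinh y)).congr_deriv (by push_cast; ring)))
    (by simp) hx
    (fun y hy hyx => sub_nonneg.2 (cosh_le_nine hy (hyx.trans hx2)))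
  linarith

lemma cosh_le_quad9 {x : ℝ} (hx : 0 ≤ x) (hx2 : x ≤ 2) : Real.cosh x ≤ 1 + 9 / 2 * x ^ 2 := by
  have h := mono_aux (f := fun y => 1 + 9 / 2 * y ^ 2 - Real.cosh y)
    (f' := fun y => 9 * y - Real.sinh y)
    (fun y => (((((hasDerivAt_pow 2 y).const_mul (9/2:ℝ)).const_add 1).sub
      (Real.hasDerivAt_cosh y)).congr_deriv (by push_cast; ring)))
    (by simp) hx
    (fun y hy hyx => sub_nonneg.2 (sinh_le_nine hy (hyx.trans hx2)))
  linarith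

lemma sinh_le_cubic {x : ℝ} (hx : 0 ≤ x) (hx2 : x ≤ 2) : Real.sinh x ≤ x + 3 / 2 * x ^ 3 := by
  have h := mono_aux (f := fun y => y + 3 / 2 * y ^ 3 - Real.sinh y)
    (f' := fun y => 1 + 9 / 2 * y ^ 2 - Real.cosh y)
    (fun y => ((((hasDerivAt_id y).add ((hasDerivAt_pow 3 y).const_mul (3/2:ℝ))).sub
      (Real.hasDerivAt_sinh y)).congr_deriv (by push_cast; ring)))
    (by simp) hx
    (fun y hy hyx => sub_nonneg.2 (cosh_le_quad9 hy (hyx.trans hx2)))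
  linarith

lemma cosh_le_quartic {x : ℝ} (hx : 0 ≤ x) (hx2 : x ≤ 2) :
    Real.cosh x ≤ 1 + x ^ 2 / 2 + 3 / 8 * x ^ 4 := by
  have h := mono_aux (f := fun y => 1 + y ^ 2 / 2 + 3 / 8 * y ^ 4 - Real.cosh y)
    (f' := fun y => y + 3 / 2 * y ^ 3 - Real.sinh y)
    (fun y => ((((((hasDerivAt_pow 2 y).div_const 2).const_add 1).add
      ((hasDerivAt_pow 4 y).const_mul (3/8:ℝ))).sub
      (Real.hasDerivAt_cosh y)).congr_deriv (by push_cast; ring)))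
    (by simp) hx
    (fun y hy hyx => sub_nonneg.2 (sinh_le_cubic hy (hyx.trans hx2)))
  linarith

lemma sinh_le_poly_mul_cosh {x : ℝ} (hx : 0 ≤ x) :
    Real.sinh x ≤ (x - x ^ 3 / 3 + 2 * x ^ 5 / 15) * Real.cosh x := by
  have h := mono_aux (f := fun y => (y - y ^ 3 / 3 + 2 * y ^ 5 / 15) * Real.cosh y - Real.sinh y)
    (f' := fun y => (2 / 3 * y ^ 4 - y ^ 2) * Real.cosh y
      + (y - y ^ 3 / 3 + 2 * y ^ 5 / 15) * Real.sinh y)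
    (fun y => (((((hasDerivAt_id y).sub ((hasDerivAt_pow 3 y).div_const 3)).add
      (((hasDerivAt_pow 5 y).const_mul (2:ℝ)).div_const 15)).mul
      (Real.hasDerivAt_cosh y)).sub (Real.hasDerivAt_sinh y)).congr_deriv (by simp only [Pi.add_apply, Pi.sub_apply, id_eq]; push_cast; ring))
    (by simp) hx ?_
  · linarith
  intro y hy _
  have hpoly : 0 ≤ y - y ^ 3 / 3 + 2 * y ^ 5 / 15 := by
    nlinarith [sq_nonneg (y ^ 2 - 5 / 4), sq_nonneg y, mul_nonneg hy (sq_nonneg y)]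
  have hsinh : 0 ≤ Real.sinh y := Real.sinh_nonneg_iff.2 hy
  have hcosh : 0 < Real.cosh y := Real.cosh_pos y
  rcases le_or_gt (y ^ 2) (3 / 2) with hc | hc
  · have hy2 : y ≤ 2 := by nlinarith
    have hcq := cosh_le_quartic hy hy2
    have hsc := sinh_ge_cubic hy
    have h1 : (y ^ 2 - 2 / 3 * y ^ 4) * Real.cosh y
        ≤ (y ^ 2 - 2 / 3 * y ^ 4) * (1 + y ^ 2 / 2 + 3 / 8 * y ^ 4) :=
      mul_le_mul_of_nonneg_left hcq (by nlinarith)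
    have h2 : (y - y ^ 3 / 3 + 2 * y ^ 5 / 15) * (y + y ^ 3 / 6)
        ≤ (y - y ^ 3 / 3 + 2 * y ^ 5 / 15) * Real.sinh y :=
      mul_le_mul_of_nonneg_left hsc hpoly
    nlinarith [pow_nonneg hy 6, pow_nonneg hy 8]
  · have h1 : 0 ≤ (2 / 3 * y ^ 4 - y ^ 2) := by nlinarith
    have := mul_nonneg hpoly hsinh
    nlinarith [mul_nonneg h1 hcosh.le]

lemma mul_tanh_le (x : ℝ) : x * Real.tanh x ≤ x ^ 2 - x ^ 4 / 3 + 2 * x ^ 6 / 15 := by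
  have key : ∀ z : ℝ, 0 ≤ z → z * Real.tanh z ≤ z ^ 2 - z ^ 4 / 3 + 2 * z ^ 6 / 15 := by
    intro z hz
    have htanh : Real.tanh z ≤ z - z ^ 3 / 3 + 2 * z ^ 5 / 15 := by
      rw [Real.tanh_eq_sinh_div_cosh, div_le_iff₀ (Real.cosh_pos z)]
      exact sinh_le_poly_mul_cosh hz
    calc z * Real.tanh z ≤ z * (z - z ^ 3 / 3 + 2 * z ^ 5 / 15) :=
          mul_le_mul_of_nonneg_left htanh hz
      _ = z ^ 2 - z ^ 4 / 3 + 2 * z ^ 6 / 15 := by ring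
  rcases le_or_gt 0 x with hx | hx
  · exact key x hx
  · have := key (-x) (by linarith)
    rw [Real.tanh_neg] at this
    have h : x * Real.tanh x = -x * -Real.tanh x := by ring
    rw [h]
    calc -x * -Real.tanh x ≤ (-x) ^ 2 - (-x) ^ 4 / 3 + 2 * (-x) ^ 6 / 15 := this
      _ = x ^ 2 - x ^ 4 / 3 + 2 * x ^ 6 / 15 := by ring


lemma pdf_eq (x : ℝ) :
    gaussianPDFReal 0 1 x = (Real.sqrt (2 * π))⁻¹ * Real.exp (-2⁻¹ * x ^ 2) := by
  rw [gaussianPDFReal]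
  push_cast
  norm_num
  left
  ring_nf

lemma transfer (g : ℝ → ℝ) (hg : Measurable g) :
    ∫ v, g v ∂(gaussianReal 0 1) = ∫ v, g v * gaussianPDFReal 0 1 v := by
  rw [gaussianReal_of_var_ne_zero 0 one_ne_zero]
  have h : (gaussianPDF 0 1)
      = fun x => (((gaussianPDFReal 0 1 x).toNNReal : NNReal) : ENNReal) := rfl
  rw [h, integral_withDensity_eq_integral_smul ((measurable_gaussianPDFReal 0 1).real_toNNReal) g]
  congr 1
  ext x
  rw [NNReal.smul_def, smul_eq_mul, Real.coe_toNNReal _ (gaussianPDFReal_nonneg 0 1 x), mul_comm]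

lemma int_pow_pdf (n : ℕ) : Integrable (fun x : ℝ => x ^ n * gaussianPDFReal 0 1 x) := by
  have h : Integrable (fun x : ℝ => x ^ (n : ℝ) * Real.exp (-(2⁻¹ : ℝ) * x ^ 2)) :=
    integrable_rpow_mul_exp_neg_mul_sq (by norm_num)
      (lt_of_lt_of_le (by norm_num) (Nat.cast_nonneg n))
  have e : (fun x : ℝ => x ^ n * gaussianPDFReal 0 1 x)
      = fun x => (Real.sqrt (2 * π))⁻¹ * (x ^ (n : ℝ) * Real.exp (-(2⁻¹ : ℝ) * x ^ 2)) := by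
    funext x
    rw [pdf_eq, Real.rpow_natCast]
    ring
  rw [e]
  exact h.const_mul _

lemma moment_eq (n : ℕ) (hn : Even n) :
    ∫ x : ℝ, x ^ n * gaussianPDFReal 0 1 x
      = (Real.sqrt (2 * π))⁻¹ *
        (2 * ((2⁻¹ : ℝ) ^ (-((n : ℝ) + 1) / 2) * (1 / 2) * Real.Gamma (((n : ℝ) + 1) / 2))) := by
  have e : (fun x : ℝ => x ^ n * gaussianPDFReal 0 1 x)
      = fun x => (Real.sqrt (2 * π))⁻¹ * (x ^ n * Real.exp (-(2⁻¹ : ℝ) * x ^ 2)) := by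
    funext x; rw [pdf_eq]; ring
  rw [e, integral_const_mul]
  congr 1
  have e2 : (fun x : ℝ => x ^ n * Real.exp (-(2⁻¹ : ℝ) * x ^ 2))
      = fun x : ℝ => (fun t : ℝ => t ^ n * Real.exp (-(2⁻¹ : ℝ) * t ^ 2)) |x| := by
    funext x
    simp only [hn.pow_abs, sq_abs]
  have h3 := integral_comp_abs (f := fun t : ℝ => t ^ n * Real.exp (-(2⁻¹ : ℝ) * t ^ 2))
  rw [← e2] at h3
  rw [h3]
  congr 1
  rw [setIntegral_congr_fun measurableSet_Ioi
    (g := fun x : ℝ => x ^ (n : ℝ) * Real.exp (-(2⁻¹ : ℝ) * x ^ (2 : ℝ)))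
    (fun x hx => by simp only [Real.rpow_natCast, Real.rpow_two])]
  exact integral_rpow_mul_exp_neg_mul_rpow zero_lt_two
    (lt_of_lt_of_le (by norm_num) (Nat.cast_nonneg n)) (by norm_num)

lemma sqrt_two_pi_pos : (0:ℝ) < Real.sqrt 2 * Real.sqrt π :=
  mul_pos (Real.sqrt_pos.2 (by norm_num)) (Real.sqrt_pos.2 Real.pi_pos)

lemma moment_two : ∫ x : ℝ, x ^ 2 * gaussianPDFReal 0 1 x = 1 := by
  rw [moment_eq 2 (by decide)]
  push_cast
  have h1 : (2⁻¹ : ℝ) ^ (-((2 : ℝ) + 1) / 2) = 2 * Real.sqrt 2 := by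
    rw [show (-((2:ℝ)+1)/2) = -(3/2) by norm_num, Real.rpow_neg (by norm_num),
      Real.inv_rpow (by norm_num), inv_inv,
      show (3/2 : ℝ) = 1 + 1/2 by norm_num, Real.rpow_add (by norm_num), Real.rpow_one,
      ← Real.sqrt_eq_rpow]
  have h3 : Real.Gamma (((2 : ℝ) + 1) / 2) = Real.sqrt π / 2 := by
    rw [show ((2:ℝ)+1)/2 = 1/2 + 1 by norm_num, Real.Gamma_add_one (by norm_num),
      Real.Gamma_one_half_eq]
    ring
  rw [h1, h3, Real.sqrt_mul (by norm_num : (0:ℝ) ≤ 2)]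
  have h := sqrt_two_pi_pos
  field_simp
  try nlinarith [Real.sq_sqrt (by norm_num : (0:ℝ) ≤ 2), Real.sq_sqrt Real.pi_pos.le]

lemma moment_four : ∫ x : ℝ, x ^ 4 * gaussianPDFReal 0 1 x = 3 := by
  rw [moment_eq 4 (by decide)]
  push_cast
  have h1 : (2⁻¹ : ℝ) ^ (-((4 : ℝ) + 1) / 2) = 4 * Real.sqrt 2 := by
    rw [show (-((4:ℝ)+1)/2) = -(5/2) by norm_num, Real.rpow_neg (by norm_num),
      Real.inv_rpow (by norm_num), inv_inv,
      show (5/2 : ℝ) = 2 + 1/2 by norm_num, Real.rpow_add (by norm_num),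
      show ((2:ℝ) ^ (2:ℝ)) = 4 by norm_num, ← Real.sqrt_eq_rpow]
  have h3 : Real.Gamma (((4 : ℝ) + 1) / 2) = 3 * Real.sqrt π / 4 := by
    rw [show ((4:ℝ)+1)/2 = 3/2 + 1 by norm_num, Real.Gamma_add_one (by norm_num),
      show (3/2 : ℝ) = 1/2 + 1 by norm_num, Real.Gamma_add_one (by norm_num),
      Real.Gamma_one_half_eq]
    ring
  rw [h1, h3, Real.sqrt_mul (by norm_num : (0:ℝ) ≤ 2)]
  have h := sqrt_two_pi_pos
  field_simp
  try nlinarith [Real.sq_sqrt (by norm_num : (0:ℝ) ≤ 2), Real.sq_sqrt Real.pi_pos.le]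

lemma moment_six : ∫ x : ℝ, x ^ 6 * gaussianPDFReal 0 1 x = 15 := by
  rw [moment_eq 6 (by decide)]
  push_cast
  have h1 : (2⁻¹ : ℝ) ^ (-((6 : ℝ) + 1) / 2) = 8 * Real.sqrt 2 := by
    rw [show (-((6:ℝ)+1)/2) = -(7/2) by norm_num, Real.rpow_neg (by norm_num),
      Real.inv_rpow (by norm_num), inv_inv,
      show (7/2 : ℝ) = 3 + 1/2 by norm_num, Real.rpow_add (by norm_num),
      show ((2:ℝ) ^ (3:ℝ)) = 8 by norm_num, ← Real.sqrt_eq_rpow]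
  have h3 : Real.Gamma (((6 : ℝ) + 1) / 2) = 15 * Real.sqrt π / 8 := by
    rw [show ((6:ℝ)+1)/2 = 5/2 + 1 by norm_num, Real.Gamma_add_one (by norm_num),
      show (5/2 : ℝ) = 3/2 + 1 by norm_num, Real.Gamma_add_one (by norm_num),
      show (3/2 : ℝ) = 1/2 + 1 by norm_num, Real.Gamma_add_one (by norm_num),
      Real.Gamma_one_half_eq]
    ring
  rw [h1, h3, Real.sqrt_mul (by norm_num : (0:ℝ) ≤ 2)]
  have h := sqrt_two_pi_pos
  field_simp
  try nlinarith [Real.sq_sqrt (by norm_num : (0:ℝ) ≤ 2), Real.sq_sqrt Real.pi_pos.le]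



lemma continuous_tanh' : Continuous Real.tanh := by
  rw [show Real.tanh = fun x => Real.sinh x / Real.cosh x from funext Real.tanh_eq_sinh_div_cosh]
  exact Real.continuous_sinh.div Real.continuous_cosh fun x => (Real.cosh_pos x).ne'

lemma abs_tanh_le_one (z : ℝ) : |Real.tanh z| ≤ 1 := by
  rw [Real.tanh_eq_sinh_div_cosh, abs_div, abs_of_pos (Real.cosh_pos z),
    div_le_one (Real.cosh_pos z), abs_le]
  constructor <;> nlinarith [Real.cosh_sq z, Real.cosh_pos z,
    sq_nonneg (Real.sinh z + Real.cosh z), sq_nonneg (Real.sinh z - Real.cosh z)]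

theorem gaussian_tanh_moment_bound (σ : ℝ) (hσ : 0 < σ) (a : ℝ) (ha : 0 < a) :
    ∫ v, v * Real.tanh (a * v) ∂(gaussianReal 0 1)
      ≤ (1 / a) * ∫ v, ((a * v) ^ 2 - (a * v) ^ 4 / 3 + 2 * (a * v) ^ 6 / 15) ∂(gaussianReal 0 1) ∧
    (1 / a) * ∫ v, ((a * v) ^ 2 - (a * v) ^ 4 / 3 + 2 * (a * v) ^ 6 / 15) ∂(gaussianReal 0 1)
      = a - a ^ 3 + 2 * a ^ 5 := by
  have hmeas1 : Measurable (fun v : ℝ => v * Real.tanh (a * v)) :=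
    measurable_id.mul (continuous_tanh'.measurable.comp (measurable_id.const_mul a))
  have hmeas2 : Measurable (fun v : ℝ => (a * v) ^ 2 - (a * v) ^ 4 / 3 + 2 * (a * v) ^ 6 / 15) := by
    have h := measurable_id.const_mul a
    exact (((h.pow_const 2).sub ((h.pow_const 4).div_const 3)).add
      (((h.pow_const 6).const_mul 2).div_const 15))
  -- the polynomial integral
  have hQe : (fun v : ℝ => ((a * v) ^ 2 - (a * v) ^ 4 / 3 + 2 * (a * v) ^ 6 / 15)
        * gaussianPDFReal 0 1 v)
      = fun v => a ^ 2 * (v ^ 2 * gaussianPDFReal 0 1 v)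
        - a ^ 4 / 3 * (v ^ 4 * gaussianPDFReal 0 1 v)
        + 2 * a ^ 6 / 15 * (v ^ 6 * gaussianPDFReal 0 1 v) := by
    funext v; ring
  have hQint : Integrable (fun v : ℝ =>
      ((a * v) ^ 2 - (a * v) ^ 4 / 3 + 2 * (a * v) ^ 6 / 15) * gaussianPDFReal 0 1 v) := by
    rw [hQe]
    exact (((int_pow_pdf 2).const_mul _).sub ((int_pow_pdf 4).const_mul _)).add
      ((int_pow_pdf 6).const_mul _)
  have hQval : ∫ v, ((a * v) ^ 2 - (a * v) ^ 4 / 3 + 2 * (a * v) ^ 6 / 15)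
        ∂(gaussianReal 0 1) = a ^ 2 - a ^ 4 + 2 * a ^ 6 := by
    rw [transfer _ hmeas2, hQe, integral_add, integral_sub]
    · rw [integral_const_mul, integral_const_mul, integral_const_mul,
        moment_two, moment_four, moment_six]
      ring
    · exact (int_pow_pdf 2).const_mul _
    · exact (int_pow_pdf 4).const_mul _
    · exact ((int_pow_pdf 2).const_mul _).sub ((int_pow_pdf 4).const_mul _)
    · exact (int_pow_pdf 6).const_mul _
  constructor
  · -- inequality
    rw [transfer _ hmeas1, transfer _ hmeas2, ← integral_const_mul]
    have hint1 : Integrable (fun v : ℝ => (v * Real.tanh (a * v)) * gaussianPDFReal 0 1 v) := by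
      refine Integrable.mono' (g := fun v => (v ^ 2 + 1) * gaussianPDFReal 0 1 v) ?_ ?_ ?_
      · have e : (fun v : ℝ => (v ^ 2 + 1) * gaussianPDFReal 0 1 v)
            = fun v => v ^ 2 * gaussianPDFReal 0 1 v + gaussianPDFReal 0 1 v := by
          funext v; ring
        rw [e]
        exact (int_pow_pdf 2).add (integrable_gaussianPDFReal 0 1)
      · exact (hmeas1.mul (measurable_gaussianPDFReal 0 1)).aestronglyMeasurable
      · refine Filter.Eventually.of_forall fun v => ?_
        have hP := gaussianPDFReal_nonneg 0 1 v
        rw [Real.norm_eq_abs, abs_mul, abs_of_nonneg hP, abs_mul]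
        have h1 : |Real.tanh (a * v)| ≤ 1 := abs_tanh_le_one _
        have h2 : |v| ≤ v ^ 2 + 1 := by nlinarith [sq_abs v, abs_nonneg v, sq_nonneg (|v| - 1)]
        have := mul_le_mul (mul_le_mul h2 h1 (abs_nonneg _) (by positivity))
          (le_refl (gaussianPDFReal 0 1 v)) hP (by positivity)
        calc |v| * |Real.tanh (a * v)| * gaussianPDFReal 0 1 v
            ≤ (v ^ 2 + 1) * 1 * gaussianPDFReal 0 1 v := this
          _ = (v ^ 2 + 1) * gaussianPDFReal 0 1 v := by ring
    refine integral_mono hint1 (hQint.const_mul _) fun v => ?_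
    have hP := gaussianPDFReal_nonneg 0 1 v
    have key := mul_tanh_le (a * v)
    have h : v * Real.tanh (a * v)
        ≤ 1 / a * ((a * v) ^ 2 - (a * v) ^ 4 / 3 + 2 * (a * v) ^ 6 / 15) := by
      calc v * Real.tanh (a * v) = 1 / a * ((a * v) * Real.tanh (a * v)) := by
            field_simp
        _ ≤ 1 / a * ((a * v) ^ 2 - (a * v) ^ 4 / 3 + 2 * (a * v) ^ 6 / 15) :=
            mul_le_mul_of_nonneg_left key (by positivity)
    calc v * Real.tanh (a * v) * gaussianPDFReal 0 1 v
        ≤ (1 / a * ((a * v) ^ 2 - (a * v) ^ 4 / 3 + 2 * (a * v) ^ 6 / 15))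
          * gaussianPDFReal 0 1 v := mul_le_mul_of_nonneg_right h hP
      _ = 1 / a * (((a * v) ^ 2 - (a * v) ^ 4 / 3 + 2 * (a * v) ^ 6 / 15)
          * gaussianPDFReal 0 1 v) := by ring
  · rw [hQval]
    field_simp
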